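/- Proposition 4: Let n ≥ 1 and define the n×n×n hypermatrices F, G, H : Fin n → Fin n → Fin n → ℂ by F u t w = n^{−1/3}·exp(2πi·t·(u−w)²/n), G u v t = n^{−1/3}·exp(2πi·t·(u−v)²/n), and H t v w = n^{−1/3}·exp(2πi·t·(v−w)²/n), where the indices are taken as integers in {0,…,n−1} and n^{−1/3} is the real cube root. Then (F, G, H) is an uncorrelated triple, i.e. Prod(F,G,H) = Δ, if and only if the congruence x² + 3y² ≡ 0 (mod n) admits no solution other than the trivial one (equivalently: for all x, y : ZMod n, x² + 3·y² = 0 implies x = 0 and y = 0). -/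

import Mathlib

private lemma sum_exp_dvd (n : ℕ) (hn : 0 < n) (S : ℤ) :
    ∑ t : Fin n, Complex.exp (2 * (Real.pi : ℂ) * Complex.I * ((t : ℕ) : ℂ) * (S : ℂ) / n)
      = if (n : ℤ) ∣ S then (n : ℂ) else 0 := by
  have hπ : (2 * (Real.pi : ℂ) * Complex.I) ≠ 0 := by
    simp [Real.pi_ne_zero, Complex.I_ne_zero]
  have hnC : (n : ℂ) ≠ 0 := Nat.cast_ne_zero.mpr hn.ne'
  set ζ : ℂ := Complex.exp (2 * (Real.pi : ℂ) * Complex.I * (S : ℂ) / n) with hζ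
  have hpow : ∀ t : ℕ, Complex.exp (2 * (Real.pi : ℂ) * Complex.I * (t : ℂ) * (S : ℂ) / n) = ζ ^ t := by
    intro t
    rw [hζ, ← Complex.exp_nat_mul]
    ring_nf
  have hone : ζ = 1 ↔ (n : ℤ) ∣ S := by
    rw [hζ, Complex.exp_eq_one_iff]
    constructor
    · rintro ⟨m, hm⟩
      refine ⟨m, ?_⟩
      have h2 : (2 * (Real.pi : ℂ) * Complex.I) * (S : ℂ) = (2 * (Real.pi : ℂ) * Complex.I) * ((m : ℂ) * n) := by
        field_simp at hm
        linear_combination (2 * (Real.pi : ℂ) * Complex.I) * hm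
      have h3 : (S : ℂ) = ((n * m : ℤ) : ℂ) := by
        have := mul_left_cancel₀ hπ h2
        push_cast
        linear_combination this
      exact_mod_cast h3
    · rintro ⟨m, rfl⟩
      exact ⟨m, by push_cast; field_simp⟩
  simp only [hpow]
  rw [Fin.sum_univ_eq_sum_range]
  by_cases h : (n : ℤ) ∣ S
  · rw [if_pos h, hone.mpr h]
    simp
  · rw [if_neg h]
    have hζ1 : ζ ≠ 1 := fun hc => h (hone.mp hc)
    rw [geom_sum_eq hζ1]
    have hζn : ζ ^ n = 1 := by
      rw [hζ, ← Complex.exp_nat_mul]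
      have : (n : ℂ) * (2 * (Real.pi : ℂ) * Complex.I * (S : ℂ) / n) = (S : ℂ) * (2 * Real.pi * Complex.I) := by
        field_simp
      rw [this, Complex.exp_int_mul_two_pi_mul_I]
    rw [hζn]
    simp

/-- Proposition 4: the third-order DFT hypermatrices `F`, `G`, `H` of side length `n`
form an uncorrelated triple if and only if `x² + 3y² ≡ 0 (mod n)` has only the
trivial solution. -/
theorem third_order_dft_uncorrelated_iff (n : ℕ) (hn : 1 ≤ n)
    (F G H : Fin n → Fin n → Fin n → ℂ)
    (hF : ∀ u t w : Fin n, F u t w = (((n : ℝ) ^ (-(1/3 : ℝ)) : ℝ) : ℂ) *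
      Complex.exp (2 * (Real.pi : ℂ) * Complex.I * ((t : ℕ) : ℂ) *
        (((u : ℕ) : ℂ) - ((w : ℕ) : ℂ)) ^ 2 / (n : ℂ)))
    (hG : ∀ u v t : Fin n, G u v t = (((n : ℝ) ^ (-(1/3 : ℝ)) : ℝ) : ℂ) *
      Complex.exp (2 * (Real.pi : ℂ) * Complex.I * ((t : ℕ) : ℂ) *
        (((u : ℕ) : ℂ) - ((v : ℕ) : ℂ)) ^ 2 / (n : ℂ)))
    (hH : ∀ t v w : Fin n, H t v w = (((n : ℝ) ^ (-(1/3 : ℝ)) : ℝ) : ℂ) *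
      Complex.exp (2 * (Real.pi : ℂ) * Complex.I * ((t : ℕ) : ℂ) *
        (((v : ℕ) : ℂ) - ((w : ℕ) : ℂ)) ^ 2 / (n : ℂ))) :
    (∀ i j k : Fin n,
        (∑ t : Fin n, F i t k * G i j t * H t j k) = if i = j ∧ j = k then 1 else 0)
      ↔ (∀ x y : ZMod n, x ^ 2 + 3 * y ^ 2 = 0 → x = 0 ∧ y = 0) := by
  have hn0 : 0 < n := hn
  haveI : NeZero n := ⟨hn0.ne'⟩
  have hnC : (n : ℂ) ≠ 0 := Nat.cast_ne_zero.mpr hn0.ne'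
  -- the integer exponent
  set S : Fin n → Fin n → Fin n → ℤ := fun i j k =>
    (((i : ℕ) : ℤ) - ((k : ℕ) : ℤ)) ^ 2 + (((i : ℕ) : ℤ) - ((j : ℕ) : ℤ)) ^ 2
      + (((j : ℕ) : ℤ) - ((k : ℕ) : ℤ)) ^ 2 with hS
  -- cube of the normalization
  have hc3 : ((((n : ℝ) ^ (-(1/3 : ℝ)) : ℝ) : ℂ)) ^ 3 = (n : ℂ)⁻¹ := by
    have hr : (((n : ℝ) ^ (-(1/3 : ℝ)) : ℝ)) ^ 3 = (n : ℝ)⁻¹ := by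
      rw [← Real.rpow_natCast ((n : ℝ) ^ (-(1/3 : ℝ))) 3,
        ← Real.rpow_mul (Nat.cast_nonneg n)]
      norm_num
      exact Real.rpow_neg_one _
    calc ((((n : ℝ) ^ (-(1/3 : ℝ)) : ℝ) : ℂ)) ^ 3
        = (((((n : ℝ) ^ (-(1/3 : ℝ)) : ℝ)) ^ 3 : ℝ) : ℂ) := by push_cast; ring
      _ = (((n : ℝ)⁻¹ : ℝ) : ℂ) := by rw [hr]
      _ = (n : ℂ)⁻¹ := by push_cast; ring
  -- the closed form of the BM product entry
  have hsum : ∀ i j k : Fin n,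
      (∑ t : Fin n, F i t k * G i j t * H t j k)
        = if (n : ℤ) ∣ S i j k then 1 else 0 := by
    intro i j k
    have hterm : ∀ t : Fin n, F i t k * G i j t * H t j k
        = (n : ℂ)⁻¹ * Complex.exp (2 * (Real.pi : ℂ) * Complex.I * ((t : ℕ) : ℂ)
            * ((S i j k : ℤ) : ℂ) / n) := by
      intro t
      rw [hF, hG, hH, ← hc3]
      rw [show ∀ c e1 e2 e3 : ℂ, (c * e1) * (c * e2) * (c * e3) = c ^ 3 * (e1 * e2 * e3)
        from fun c e1 e2 e3 => by ring]
      congr 1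
      rw [← Complex.exp_add, ← Complex.exp_add]
      congr 1
      rw [hS]
      push_cast
      field_simp
    rw [Finset.sum_congr rfl (fun t _ => hterm t), ← Finset.mul_sum,
      sum_exp_dvd n hn0 (S i j k)]
    by_cases h : (n : ℤ) ∣ S i j k
    · rw [if_pos h, if_pos h, inv_mul_cancel₀ hnC]
    · rw [if_neg h, if_neg h, mul_zero]
  -- divisibility in terms of ZMod
  have hdvd : ∀ i j k : Fin n, ((n : ℤ) ∣ S i j k) ↔
      ((((i : ℕ) : ZMod n) - ((k : ℕ) : ZMod n)) ^ 2
        + (((i : ℕ) : ZMod n) - ((j : ℕ) : ZMod n)) ^ 2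
        + (((j : ℕ) : ZMod n) - ((k : ℕ) : ZMod n)) ^ 2 = 0) := by
    intro i j k
    rw [← ZMod.intCast_zmod_eq_zero_iff_dvd]
    constructor
    · intro h; rw [hS] at h; push_cast at h; linear_combination h
    · intro h; rw [hS]; push_cast; linear_combination h
  -- injectivity of Fin n → ZMod n
  have hinj : ∀ i j : Fin n, (((i : ℕ) : ZMod n) = ((j : ℕ) : ZMod n)) → i = j := by
    intro i j h
    have : (i : ℕ) = (j : ℕ) := by
      have h1 := ZMod.val_cast_of_lt i.isLt
      have h2 := ZMod.val_cast_of_lt j.isLt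
      rw [← h1, ← h2, h]
    exact Fin.ext this
  constructor
  · -- uncorrelated → only trivial solutions
    intro hunc x y hxy
    -- the key consequence: for a b : ZMod n with (a+b)²+a²+b² = 0, a = 0 ∧ b = 0
    have key : ∀ a b : ZMod n, (a + b) ^ 2 + a ^ 2 + b ^ 2 = 0 → a = 0 ∧ b = 0 := by
      intro a b hab
      set i : Fin n := ⟨(a + b).val, ZMod.val_lt _⟩
      set j : Fin n := ⟨b.val, ZMod.val_lt _⟩
      set k : Fin n := ⟨(0 : ℕ) % n, Nat.mod_lt _ hn0⟩
      have hi : ((i : ℕ) : ZMod n) = a + b := by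
        simp [i, ZMod.natCast_val, ZMod.cast_id]
      have hj : ((j : ℕ) : ZMod n) = b := by
        simp [j, ZMod.natCast_val, ZMod.cast_id]
      have hk : ((k : ℕ) : ZMod n) = 0 := by
        simp [k]
      have hd : (n : ℤ) ∣ S i j k := by
        rw [hdvd, hi, hj, hk]
        linear_combination hab
      have := hunc i j k
      rw [hsum i j k, if_pos hd] at this
      by_cases heq : i = j ∧ j = k
      · obtain ⟨h1, h2⟩ := heq
        have ha : a = 0 := by
          have := congrArg (fun z : Fin n => ((z : ℕ) : ZMod n)) h1
          simp only [hi, hj] at this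
          linear_combination this
        have hb : b = 0 := by
          have := congrArg (fun z : Fin n => ((z : ℕ) : ZMod n)) h2
          simp only [hj, hk] at this
          linear_combination this
        exact ⟨ha, hb⟩
      · rw [if_neg heq] at this
        exact absurd this one_ne_zero
    -- step 1: 2x = 0 and 2y = 0
    have h1 := key (x + y) (y - x) (by linear_combination 2 * hxy)
    have h2x : 2 * x = 0 := by
      obtain ⟨ha, hb⟩ := h1; linear_combination ha - hb
    have h2y : 2 * y = 0 := by
      obtain ⟨ha, hb⟩ := h1; linear_combination ha + hb
    -- step 2: x = 0
    have hx : x = 0 := by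
      have := key x (-x) (by linear_combination x * h2x)
      exact this.1
    have hy : y = 0 := by
      have := key (-y) y (by linear_combination y * h2y)
      have := this.1
      linear_combination -this
    exact ⟨hx, hy⟩
  · -- only trivial solutions → uncorrelated
    intro htriv i j k
    rw [hsum i j k]
    by_cases heq : i = j ∧ j = k
    · rw [if_pos heq, if_pos ?_]
      obtain ⟨h1, h2⟩ := heq
      subst h1; subst h2
      rw [hS]
      simp
    · rw [if_neg heq, if_neg ?_]
      intro hd
      apply heq
      rw [hdvd] at hd
      set A : ZMod n := ((i : ℕ) : ZMod n) - ((j : ℕ) : ZMod n) with hA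
      set B : ZMod n := ((j : ℕ) : ZMod n) - ((k : ℕ) : ZMod n) with hB
      have hAB : (A + B) ^ 2 + A ^ 2 + B ^ 2 = 0 := by
        rw [hA, hB]; linear_combination hd
      have h1 := htriv (A - B) (A + B) (by linear_combination 2 * hAB)
      have h2A : 2 * A = 0 := by
        obtain ⟨ha, hb⟩ := h1; linear_combination ha + hb
      have h2B : 2 * B = 0 := by
        obtain ⟨ha, hb⟩ := h1; linear_combination hb - ha
      have hA0 : A = 0 := (htriv A A (by linear_combination A * h2A + A * h2A)).1
      have hB0 : B = 0 := (htriv B B (by linear_combination B * h2B + B * h2B)).1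
      constructor
      · apply hinj; rw [← sub_eq_zero]; exact hA0
      · apply hinj; rw [← sub_eq_zero]; exact hB0
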